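/- Let B be an n×n row-stochastic matrix that is irreducible. Then θ_{1,3} = exp(2πι/3) is an eigenvalue of B if and only if the directed graph associated with B is 3k-cyclic for some positive integer k, i.e., if and only if there exist a positive integer k and a partition of {1,…,n} into 3k nonempty sets V₀, V₁, …, V_{3k−1} such that B_{ij} ≠ 0 implies i ∈ V_l and j ∈ V_{(l+1) mod 3k} for some l. -/

import Mathlib

open Matrix

/-- `theta p q = exp(2·π·ι·p/q)`, the `p`-th power of the primitive `q`-th root of unity. -/
noncomputable def theta (p q : ℕ) : ℂ :=
  Complex.exp (2 * Real.pi * Complex.I * p / q)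

/-- A real square matrix is row-stochastic if its entries are nonnegative and
every row sums to 1. -/
def RowStochastic {n : ℕ} (B : Matrix (Fin n) (Fin n) ℝ) : Prop :=
  (∀ i j, 0 ≤ B i j) ∧ ∀ i, ∑ j, B i j = 1

/-- A real square matrix is irreducible if its support digraph
(edge `(i,j)` whenever `B i j ≠ 0`) is strongly connected. -/
def IrreducibleMatrix {n : ℕ} (B : Matrix (Fin n) (Fin n) ℝ) : Prop :=
  ∀ i j : Fin n, Relation.ReflTransGen (fun a b => B a b ≠ 0) i j

private lemma pow_mod_eq_aux {ζ : ℂ} {m : ℕ} (h : ζ ^ m = 1) (a : ℕ) :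
    ζ ^ (a % m) = ζ ^ a := by
  conv_rhs => rw [← Nat.div_add_mod a m]
  rw [pow_add, pow_mul, h, one_pow, one_mul]

private lemma pow_congr_aux {ζ : ℂ} {m : ℕ} (h : ζ ^ m = 1) {a b : ℕ}
    (hab : a ≡ b [MOD m]) : ζ ^ a = ζ ^ b := by
  rw [← pow_mod_eq_aux h a, ← pow_mod_eq_aux h b, hab]

private lemma re_eq_abs_aux {z : ℂ} {r : ℝ} (h1 : ‖z‖ ≤ r) (h2 : z.re = r) :
    z = (r : ℂ) := by
  have him : z.im = 0 := by
    have h3 : z.re ^ 2 + z.im ^ 2 ≤ r ^ 2 := by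
      have := Complex.sq_norm z
      have h4 : ‖z‖ ^ 2 ≤ r ^ 2 := by
        have h0 : (0:ℝ) ≤ ‖z‖ := norm_nonneg z
        nlinarith
      rw [Complex.sq_norm, Complex.normSq_apply] at h4
      nlinarith
    nlinarith [sq_nonneg z.im, h2 ▸ h3]
  have : z = (z.re : ℂ) := by
    apply Complex.ext <;> simp [him]
  rw [this, h2]

private lemma theta_eq : theta 1 3 = Complex.exp (2 * Real.pi * Complex.I / (3:ℕ)) := by
  unfold theta
  norm_num

private lemma theta_prim : IsPrimitiveRoot (theta 1 3) 3 := by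
  rw [theta_eq]
  exact Complex.isPrimitiveRoot_exp 3 (by norm_num)

private lemma theta_pow_three : (theta 1 3) ^ 3 = 1 := theta_prim.pow_eq_one

private lemma theta_abs : ‖theta 1 3‖ = 1 := by
  have h := theta_pow_three
  have h2 : ‖theta 1 3‖ ^ 3 = 1 := by
    rw [← norm_pow, h, norm_one]
  have h0 : (0:ℝ) ≤ ‖theta 1 3‖ := norm_nonneg _
  nlinarith [sq_nonneg (‖theta 1 3‖ - 1), sq_nonneg (‖theta 1 3‖ + 1)]

/-- for an irreducible row-stochastic `B`, `θ_{1,3}` is an eigenvalue of `B`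
iff the digraph of `B` is `3k`-cyclic for some positive integer `k`, i.e. iff the vertices
can be partitioned into `3k` nonempty sets `V₀, …, V_{3k-1}` such that every edge goes from
some `V_l` to `V_{(l+1) mod 3k}`. -/
theorem stmt2 {n : ℕ} (B : Matrix (Fin n) (Fin n) ℝ)
    (hrs : RowStochastic B) (hirr : IrreducibleMatrix B) :
    (∃ x : Fin n → ℂ, x ≠ 0 ∧ (B.map (Complex.ofReal)).mulVec x = theta 1 3 • x) ↔
    (∃ k : ℕ, 0 < k ∧ ∃ V : ZMod (3 * k) → Set (Fin n),
      (∀ l, (V l).Nonempty) ∧ (∀ i, ∃! l, i ∈ V l) ∧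
      (∀ i j, B i j ≠ 0 → ∀ l, i ∈ V l → j ∈ V (l + 1))) := by
  set θ := theta 1 3 with hθdef
  have hθ3 : θ ^ 3 = 1 := theta_pow_three
  have habsθ : ‖θ‖ = 1 := theta_abs
  constructor
  · rintro ⟨x, hx0, heig⟩
    -- basic setup
    have hne : Nonempty (Fin n) := by
      by_contra h
      exact hx0 (funext fun i => absurd ⟨i⟩ h)
    obtain ⟨i₀, hi₀⟩ := Finite.exists_max (fun j => ‖x j‖)
    set M := ‖x i₀‖ with hMdef
    have hMpos : 0 < M := by
      rcases (norm_nonneg (x i₀)).lt_or_eq with h | h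
      · exact h
      · exfalso
        apply hx0
        funext j
        have : ‖x j‖ ≤ 0 := le_trans (hi₀ j) h.symm.le
        have := le_antisymm this (norm_nonneg _)
        simpa using this
    have hxi₀ne : x i₀ ≠ 0 := by
      intro h
      rw [hMdef, h] at hMpos
      simp at hMpos
    have heq : ∀ i, ∑ j, (B i j : ℂ) * x j = θ * x i := by
      intro i
      have := congrFun heig i
      simpa [Matrix.mulVec, dotProduct, Matrix.map_apply, Pi.smul_apply, smul_eq_mul]
        using this
    -- the key rigidity lemma
    have key : ∀ i, ‖x i‖ = M → ∀ j, B i j ≠ 0 → x j = θ * x i := by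
      intro i hiM j hij
      set c := (starRingEnd ℂ) (θ * x i) with hcdef
      have habsθxi : ‖θ * x i‖ = M := by
        rw [norm_mul, habsθ, one_mul, hiM]
      have hcabs : ‖c‖ = M := by
        rw [hcdef, Complex.norm_conj, habsθxi]
      have h1 : c * (θ * x i) = ((M ^ 2 : ℝ) : ℂ) := by
        rw [mul_comm, hcdef, Complex.mul_conj, ← Complex.sq_norm, habsθxi]
      have h2 : (∑ j, (B i j : ℂ) * (c * x j)) = ((M ^ 2 : ℝ) : ℂ) := by
        have : (∑ j, (B i j : ℂ) * (c * x j)) = c * ∑ j, (B i j : ℂ) * x j := by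
          rw [Finset.mul_sum]
          exact Finset.sum_congr rfl fun j _ => by ring
        rw [this, heq i, h1]
      have h3 : (∑ j, B i j * (c * x j).re) = M ^ 2 := by
        have h2' := congrArg Complex.re h2
        rw [Complex.re_sum] at h2'
        simp only [Complex.re_ofReal_mul, Complex.ofReal_re] at h2'
        exact h2'
      have hbound : ∀ j, (c * x j).re ≤ M ^ 2 := by
        intro j
        calc (c * x j).re ≤ ‖c * x j‖ := Complex.re_le_norm _
          _ = M * ‖x j‖ := by rw [norm_mul, hcabs]
          _ ≤ M * M := by
              exact mul_le_mul_of_nonneg_left (hi₀ j) hMpos.le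
          _ = M ^ 2 := by ring
      have hzero : (∑ j, B i j * (M ^ 2 - (c * x j).re)) = 0 := by
        have hsum : (∑ j, B i j * (M ^ 2 : ℝ)) = M ^ 2 := by
          rw [← Finset.sum_mul, hrs.2 i, one_mul]
        calc (∑ j, B i j * (M ^ 2 - (c * x j).re))
            = (∑ j, B i j * (M ^ 2 : ℝ)) - ∑ j, B i j * (c * x j).re := by
              rw [← Finset.sum_sub_distrib]
              exact Finset.sum_congr rfl fun j _ => by ring
          _ = 0 := by rw [hsum, h3, sub_self]
      have hterm : B i j * (M ^ 2 - (c * x j).re) = 0 := by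
        have hnonneg : ∀ j' ∈ Finset.univ, 0 ≤ B i j' * (M ^ 2 - (c * x j').re) :=
          fun j' _ => mul_nonneg (hrs.1 i j') (by linarith [hbound j'])
        exact (Finset.sum_eq_zero_iff_of_nonneg hnonneg).mp hzero j (Finset.mem_univ j)
      have hre : (c * x j).re = M ^ 2 := by
        rcases mul_eq_zero.mp hterm with h | h
        · exact absurd h hij
        · linarith
      have hc_abs_le : ‖c * x j‖ ≤ M ^ 2 := by
        rw [norm_mul, hcabs]
        calc M * ‖x j‖ ≤ M * M := mul_le_mul_of_nonneg_left (hi₀ j) hMpos.le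
          _ = M ^ 2 := by ring
      have hcx : c * x j = ((M ^ 2 : ℝ) : ℂ) := re_eq_abs_aux hc_abs_le hre
      have hcne : c ≠ 0 := by
        intro h
        rw [h, norm_zero] at hcabs
        exact hMpos.ne' hcabs.symm
      exact mul_left_cancel₀ hcne (by rw [hcx, h1])
    -- every vertex has value θ^d * x i₀ for some d
    have P : ∀ j, ∃ d : ℕ, x j = θ ^ d * x i₀ := by
      intro j
      have h := hirr i₀ j
      induction h with
      | refl => exact ⟨0, by simp⟩
      | @tail b c hab hbc ih =>
          obtain ⟨d, hd⟩ := ih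
          have habsb : ‖x b‖ = M := by
            rw [hd, norm_mul, norm_pow, habsθ, one_pow, one_mul]
          exact ⟨d + 1, by rw [key b habsb c hbc, hd]; ring⟩
    have hout : ∀ i, ∃ j, B i j ≠ 0 := by
      intro i
      have h1 := hrs.2 i
      have : (∑ j, B i j) ≠ 0 := by rw [h1]; norm_num
      obtain ⟨j, _, hj⟩ := Finset.exists_ne_zero_of_sum_ne_zero this
      exact ⟨j, hj⟩
    have hlevel : ∀ m : ℕ, ∃ j, x j = θ ^ m * x i₀ := by
      intro m
      induction m with
      | zero => exact ⟨i₀, by simp⟩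
      | succ m ih =>
          obtain ⟨j, hj⟩ := ih
          obtain ⟨j', hj'⟩ := hout j
          have habsj : ‖x j‖ = M := by
            rw [hj, norm_mul, norm_pow, habsθ, one_pow, one_mul]
          exact ⟨j', by rw [key j habsj j' hj', hj]; ring⟩
    -- construct the partition with k = 1
    haveI : NeZero (3 * 1) := ⟨by norm_num⟩
    haveI : Fact (1 < 3 * 1) := ⟨by norm_num⟩
    have hθ31 : θ ^ (3 * 1) = 1 := by
      norm_num [hθ3]
    refine ⟨1, one_pos, fun l => {j | x j = θ ^ l.val * x i₀}, ?_, ?_, ?_⟩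
    · intro l
      obtain ⟨j, hj⟩ := hlevel l.val
      exact ⟨j, hj⟩
    · intro i
      obtain ⟨d, hd⟩ := P i
      refine ⟨(d : ZMod (3 * 1)), ?_, ?_⟩
      · show x i = θ ^ (ZMod.val (d : ZMod (3 * 1))) * x i₀
        rw [ZMod.val_natCast, pow_mod_eq_aux hθ31, hd]
      · intro l hl
        have hl' : x i = θ ^ l.val * x i₀ := hl
        have hd' : x i = θ ^ (ZMod.val (d : ZMod (3 * 1))) * x i₀ := by
          rw [ZMod.val_natCast, pow_mod_eq_aux hθ31, hd]
        have hcancel : θ ^ l.val = θ ^ (ZMod.val (d : ZMod (3 * 1))) :=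
          mul_right_cancel₀ hxi₀ne (hl'.symm.trans hd')
        have hv1 : l.val < 3 := by have := ZMod.val_lt l; omega
        have hv2 : ZMod.val (d : ZMod (3 * 1)) < 3 := by
          have := ZMod.val_lt (d : ZMod (3 * 1)); omega
        exact ZMod.val_injective (3 * 1) (theta_prim.pow_inj hv1 hv2 hcancel)
    · intro i j hBij l hi
      have hi' : x i = θ ^ l.val * x i₀ := hi
      have habsi : ‖x i‖ = M := by
        rw [hi', norm_mul, norm_pow, habsθ, one_pow, one_mul]
      have hxj : x j = θ ^ (l.val + 1) * x i₀ := by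
        rw [key i habsi j hBij, hi']; ring
      show x j = θ ^ (l + 1).val * x i₀
      have hval : (l + 1).val = (l.val + 1) % (3 * 1) := by
        rw [ZMod.val_add, ZMod.val_one]
      rw [hval, pow_mod_eq_aux hθ31, hxj]
  · rintro ⟨k, hk, V, hVne, hpart, hedge⟩
    haveI : NeZero (3 * k) := ⟨by positivity⟩
    haveI : Fact (1 < 3 * k) := ⟨by omega⟩
    set ζ := Complex.exp (2 * Real.pi * Complex.I / (3 * k : ℕ)) with hζdef
    have h3kne : ((3 * k : ℕ) : ℂ) ≠ 0 := by
      simp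
      omega
    have hkne : ((k : ℕ) : ℂ) ≠ 0 := by
      simp
      omega
    have hζ1 : ζ ^ (3 * k) = 1 := by
      rw [hζdef, ← Complex.exp_nat_mul]
      rw [show ((3 * k : ℕ) : ℂ) * (2 * Real.pi * Complex.I / (3 * k : ℕ))
            = 2 * Real.pi * Complex.I from by field_simp]
      exact Complex.exp_two_pi_mul_I
    have hζk : ζ ^ k = θ := by
      rw [hζdef, ← Complex.exp_nat_mul, hθdef, theta_eq]
      congr 1
      field_simp
      push_cast
      ring
    have hζne : ζ ≠ 0 := Complex.exp_ne_zero _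
    -- class function
    choose cl hcl hclU using hpart
    refine ⟨fun i => ζ ^ (k * (cl i).val), ?_, ?_⟩
    · intro h
      obtain ⟨i, _⟩ := hVne 0
      have := congrFun h i
      exact pow_ne_zero _ hζne this
    · funext i
      have hterm : ∀ j, (B i j : ℂ) * ζ ^ (k * (cl j).val)
          = (B i j : ℂ) * (θ * ζ ^ (k * (cl i).val)) := by
        intro j
        by_cases hBij : B i j = 0
        · simp [hBij]
        · have hjV : j ∈ V (cl i + 1) := hedge i j hBij (cl i) (hcl i)
          have hclj : cl i + 1 = cl j := hclU j _ hjV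
          rw [← hclj]
          congr 1
          have hval : (cl i + 1).val = ((cl i).val + 1) % (3 * k) := by
            rw [ZMod.val_add, ZMod.val_one]
          rw [hval]
          have hmod : k * (((cl i).val + 1) % (3 * k)) ≡ k * ((cl i).val + 1)
              [MOD 3 * k] := Nat.ModEq.mul_left k (Nat.mod_modEq _ _)
          rw [pow_congr_aux hζ1 hmod, Nat.mul_add, mul_one, pow_add, hζk]
          ring
      calc (B.map Complex.ofReal).mulVec (fun i => ζ ^ (k * (cl i).val)) i
          = ∑ j, (B i j : ℂ) * ζ ^ (k * (cl j).val) := by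
            simp [Matrix.mulVec, dotProduct, Matrix.map_apply]
        _ = ∑ j, (B i j : ℂ) * (θ * ζ ^ (k * (cl i).val)) := by
            exact Finset.sum_congr rfl fun j _ => hterm j
        _ = (∑ j, (B i j : ℂ)) * (θ * ζ ^ (k * (cl i).val)) := by
            rw [Finset.sum_mul]
        _ = θ * ζ ^ (k * (cl i).val) := by
            have : (∑ j, (B i j : ℂ)) = 1 := by
              rw [← Complex.ofReal_sum]
              rw [hrs.2 i]
              norm_num
            rw [this, one_mul]
        _ = (θ • fun i => ζ ^ (k * (cl i).val)) i := by
            simp
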